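/- Let g ≥ h ≥ 2 be integers, let A ⊆ [n] be a C_h[g]-set in ℤ, and let B ⊆ [n] be any finite set with |B| ≥ h. Then |A|^{h/(h-1)} ≤ |A + B| · ( (g-1)^{1/(h-1)} + (h-1)·|A|^{1/(h-1)} / |B| ), where A + B = {a + b : a ∈ A, b ∈ B} is the sumset. -/

import Mathlib

open Pointwise

open Finset

/-- `A ⊆ Γ` is a `C_h[g]`-set. -/
def IsChSet {Γ : Type*} [AddCommGroup Γ] (h g : ℕ) (A : Set Γ) : Prop :=
  ∀ X : Finset Γ, X.card = h → ∀ K : Finset Γ, K.card = g →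
    ∃ k ∈ K, ¬ (∀ x ∈ X, x + k ∈ A)

lemma sumR (A B : Finset ℤ) :
    ∑ s ∈ A + B, (B.filter (fun b => s - b ∈ A)).card = A.card * B.card := by
  rw [← Finset.card_product]
  rw [Finset.card_eq_sum_card_fiberwise (f := fun p : ℤ × ℤ => p.1 + p.2) (t := A + B)
    (fun p hp => Finset.add_mem_add (Finset.mem_product.1 hp).1 (Finset.mem_product.1 hp).2)]
  refine Finset.sum_congr rfl fun s hs => ?_
  refine Finset.card_nbij' (fun b => (s - b, b)) (fun p => p.2) ?_ ?_ ?_ ?_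
  · intro b hb
    simp only [Finset.mem_coe, Finset.mem_filter] at hb
    simp only [Finset.mem_coe, Finset.mem_filter, Finset.mem_product]
    exact ⟨⟨hb.2, hb.1⟩, by ring⟩
  · intro p hp
    simp only [Finset.mem_coe, Finset.mem_filter, Finset.mem_product] at hp
    simp only [Finset.mem_coe, Finset.mem_filter]
    refine ⟨hp.1.2, ?_⟩
    have := hp.1.1; have h2 := hp.2
    have : s - p.2 = p.1 := by omega
    rwa [this]
  · intro b hb; rfl
  · intro p hp
    simp only [Finset.mem_coe, Finset.mem_filter, Finset.mem_product] at hp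
    refine Prod.ext ?_ rfl
    simp only
    omega

lemma translates_le (g h : ℕ) (A : Finset ℤ) (hA : IsChSet h g (A : Set ℤ))
    (Y : Finset ℤ) (hY : Y.card = h) (S : Finset ℤ) :
    (S.filter (fun s => ∀ b ∈ Y, s - b ∈ A)).card ≤ g - 1 := by
  by_contra hlt
  push_neg at hlt
  have hg : g ≤ (S.filter (fun s => ∀ b ∈ Y, s - b ∈ A)).card := by omega
  obtain ⟨K, hKsub, hKcard⟩ := Finset.exists_subset_card_eq hg
  obtain ⟨k, hk, hnot⟩ := hA (Y.image (fun b => -b))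
    (by rw [Finset.card_image_of_injective _ neg_injective, hY]) K hKcard
  apply hnot
  intro x hx
  simp only [Finset.mem_image] at hx
  obtain ⟨b, hb, rfl⟩ := hx
  have hmem := (Finset.mem_filter.1 (hKsub hk)).2 b hb
  have : -b + k = k - b := by ring
  rw [this]
  exact hmem

lemma sum_choose_le (g h : ℕ) (A B S : Finset ℤ) (hA : IsChSet h g (A : Set ℤ)) :
    ∑ s ∈ S, ((B.filter (fun b => s - b ∈ A)).card).choose h
      ≤ (g - 1) * B.card.choose h := by
  have key : ∀ s : ℤ, ((B.filter (fun b => s - b ∈ A)).card).choose h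
      = ((B.powersetCard h).filter (fun Y => ∀ b ∈ Y, s - b ∈ A)).card := by
    intro s
    rw [← Finset.card_powersetCard]
    congr 1
    ext Y
    simp only [Finset.mem_powersetCard, Finset.mem_filter, Finset.subset_iff,
      Finset.mem_filter]
    constructor
    · rintro ⟨h1, h2⟩
      exact ⟨⟨fun {x} hx => (h1 hx).1, h2⟩, fun b hb => (h1 hb).2⟩
    · rintro ⟨⟨h1, h2⟩, h3⟩
      exact ⟨fun {x} hx => ⟨h1 hx, h3 x hx⟩, h2⟩
  simp_rw [key]
  have swap : ∑ s ∈ S, ((B.powersetCard h).filter (fun Y => ∀ b ∈ Y, s - b ∈ A)).card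
      = ∑ Y ∈ B.powersetCard h, (S.filter (fun s => ∀ b ∈ Y, s - b ∈ A)).card := by
    simp_rw [Finset.card_filter]
    exact Finset.sum_comm
  rw [swap]
  calc ∑ Y ∈ B.powersetCard h, (S.filter (fun s => ∀ b ∈ Y, s - b ∈ A)).card
      ≤ ∑ Y ∈ B.powersetCard h, (g - 1) := by
        refine Finset.sum_le_sum fun Y hY => ?_
        exact translates_le g h A hA Y (Finset.mem_powersetCard.1 hY).2 S
    _ = B.card.choose h * (g - 1) := by rw [Finset.sum_const, Finset.card_powersetCard, smul_eq_mul]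
    _ = (g - 1) * B.card.choose h := by ring

lemma desc_lb (r k : ℕ) : r * (r - k) ^ k ≤ r.descFactorial (k + 1) := by
  rw [Nat.descFactorial_eq_prod_range]
  rw [Finset.prod_range_succ']
  have h1 : (r - k) ^ k ≤ ∏ i ∈ Finset.range k, (r - (i + 1)) := by
    calc (r - k) ^ k = ∏ _i ∈ Finset.range k, (r - k) := by
          rw [Finset.prod_const, Finset.card_range]
      _ ≤ ∏ i ∈ Finset.range k, (r - (i + 1)) := by
          refine Finset.prod_le_prod' fun i hi => ?_
          have := Finset.mem_range.1 hi
          omega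
  calc r * (r - k) ^ k ≤ r * ∏ i ∈ Finset.range k, (r - (i + 1)) :=
        Nat.mul_le_mul_left r h1
    _ = (∏ i ∈ Finset.range k, (r - (i + 1))) * (r - 0) := by
        rw [Nat.sub_zero]; ring

lemma psi_convex (k : ℕ) (c : ℝ) :
    ConvexOn ℝ (Set.Ici 0) (fun x : ℝ => x * (max (x - c) 0) ^ k) := by
  have haff : ConvexOn ℝ (Set.Ici (0:ℝ)) (fun x : ℝ => x - c) := by
    refine ⟨convex_Ici 0, fun x _ y _ a b ha hb hab => ?_⟩
    refine le_of_eq ?_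
    simp only [smul_eq_mul]
    have e : a * (x - c) + b * (y - c) = a * x + b * y - (a + b) * c := by ring
    rw [e, hab, one_mul]
  have hzero : ConvexOn ℝ (Set.Ici (0:ℝ)) (fun _ : ℝ => (0:ℝ)) := convexOn_const 0 (convex_Ici 0)
  have hmax : ConvexOn ℝ (Set.Ici (0:ℝ)) (fun x : ℝ => max (x - c) 0) := haff.sup hzero
  have hpow : ConvexOn ℝ (Set.Ici (0:ℝ)) ((fun x : ℝ => max (x - c) 0) ^ k) :=
    hmax.pow (fun x _ => le_max_right _ _) k
  have hid : ConvexOn ℝ (Set.Ici (0:ℝ)) (fun x : ℝ => x) := convexOn_id (convex_Ici 0)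
  have hmono : MonovaryOn (fun x : ℝ => x) ((fun x : ℝ => max (x - c) 0) ^ k) (Set.Ici 0) := by
    intro i _ j _ hij
    by_contra hle
    push_neg at hle
    have h1 : max (j - c) 0 ≤ max (i - c) 0 := max_le_max (by linarith) le_rfl
    have h2 : ((fun x : ℝ => max (x - c) 0) ^ k) j ≤ ((fun x : ℝ => max (x - c) 0) ^ k) i := by
      simp only [Pi.pow_apply]
      exact pow_le_pow_left₀ (le_max_right _ _) h1 k
    linarith
  have hres := hid.mul hpow (fun x hx => hx)
    (fun x _ => by simp only [Pi.pow_apply]; positivity) hmono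
  have e2 : (fun x : ℝ => x * (max (x - c) 0) ^ k)
      = (fun x : ℝ => x) * ((fun x : ℝ => max (x - c) 0) ^ k) := by
    funext x; simp [Pi.pow_apply]
  rw [e2]; exact hres

lemma psi_le_desc (r k : ℕ) (hk : 1 ≤ k) :
    (r : ℝ) * (max ((r:ℝ) - (k:ℝ)) 0) ^ k ≤ ((r.descFactorial (k+1) : ℕ) : ℝ) := by
  rcases le_or_gt (r:ℝ) (k:ℝ) with h | h
  · rw [max_eq_right (by linarith), zero_pow (by omega), mul_zero]
    positivity
  · have hrk : k ≤ r := by exact_mod_cast h.le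
    rw [max_eq_left (by linarith)]
    have e : (r:ℝ) - (k:ℝ) = ((r - k : ℕ) : ℝ) := by
      rw [Nat.cast_sub hrk]
    rw [e]
    exact_mod_cast desc_lb r k


lemma alg1 (a b m c gg : ℝ) (k : ℕ) (hb : 0 < b) (hm : 0 < m)
    (H : (a * b / m) * (a * b / m - c) ^ k ≤ gg * b ^ (k+1) / m) :
    a * (a - c * (m / b)) ^ k ≤ gg * m ^ k := by
  have hlam : (0:ℝ) < m / b := by positivity
  have H2 := mul_le_mul_of_nonneg_right H (le_of_lt (pow_pos hlam (k+1)))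
  have key1 : (a * b / m) * (m / b) = a := by field_simp
  have key2 : (a * b / m - c) * (m / b) = a - c * (m / b) := by field_simp
  calc a * (a - c * (m / b)) ^ k
      = ((a * b / m) * (m / b)) * ((a * b / m - c) * (m / b)) ^ k := by rw [key1, key2]
    _ = ((a * b / m) * (a * b / m - c) ^ k) * (m / b) ^ (k+1) := by
        rw [mul_pow, pow_succ]; ring
    _ ≤ (gg * b ^ (k+1) / m) * (m / b) ^ (k+1) := H2
    _ = gg * m ^ k := by
        rw [div_pow]
        field_simp
        ring

theorem stmt3 (g h n : ℕ) (hh : 2 ≤ h) (hgh : h ≤ g) (A B : Finset ℤ)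
    (hAn : (A : Set ℤ) ⊆ Set.Icc 1 (n : ℤ)) (hBn : (B : Set ℤ) ⊆ Set.Icc 1 (n : ℤ))
    (hBcard : h ≤ B.card) (hA : IsChSet h g (A : Set ℤ)) :
    (A.card : ℝ) ^ ((h : ℝ) / ((h : ℝ) - 1)) ≤ ((A + B).card : ℝ) *
      (((g : ℝ) - 1) ^ ((1 : ℝ) / ((h : ℝ) - 1))
        + ((h : ℝ) - 1) * (A.card : ℝ) ^ ((1 : ℝ) / ((h : ℝ) - 1)) / (B.card : ℝ)) := by
  obtain ⟨k, rfl⟩ : ∃ k, h = k + 1 := ⟨h - 1, by omega⟩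
  have hk1 : 1 ≤ k := by omega
  have hkR : (1:ℝ) ≤ (k:ℝ) := by exact_mod_cast hk1
  have hkR0 : (0:ℝ) < (k:ℝ) := by linarith
  have hg2 : 2 ≤ g := by omega
  have hgR : (1:ℝ) ≤ (g:ℝ) - 1 := by
    have : (2:ℝ) ≤ (g:ℝ) := by exact_mod_cast hg2
    linarith
  have hgR0 : (0:ℝ) ≤ (g:ℝ) - 1 := by linarith
  -- simplify casts in the goal
  have hcast : ((k+1 : ℕ) : ℝ) = (k:ℝ) + 1 := by push_cast; ring
  rw [hcast]
  have hexp1 : (k:ℝ) + 1 - 1 = (k:ℝ) := by ring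
  rw [hexp1]
  set a : ℝ := (A.card : ℝ) with ha_def
  set b : ℝ := (B.card : ℝ) with hb_def
  set m : ℝ := ((A + B).card : ℝ) with hm_def
  have ha0 : 0 ≤ a := Nat.cast_nonneg _
  have hb0 : (0:ℝ) < b := by
    rw [hb_def]
    exact_mod_cast (show 0 < B.card by omega)
  rcases Finset.eq_empty_or_nonempty A with hAe | hAne
  · have : a = 0 := by rw [ha_def, hAe]; simp
    rw [this, Real.zero_rpow (by positivity), Real.zero_rpow (by positivity)]
    have h1 : (0:ℝ) ≤ ((g:ℝ)-1) ^ ((1:ℝ)/(k:ℝ)) := Real.rpow_nonneg hgR0 _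
    have h2 : (0:ℝ) ≤ m := Nat.cast_nonneg _
    have : ((k:ℝ)) * 0 / b = 0 := by ring
    rw [this, add_zero]
    positivity
  -- nonempty case
  have hBne : B.Nonempty := Finset.card_pos.1 (by omega)
  have hSne : (A + B).Nonempty := hAne.add hBne
  have hm0 : (0:ℝ) < m := by
    rw [hm_def]
    exact_mod_cast Finset.card_pos.2 hSne
  have haP : (0:ℝ) < a := by
    rw [ha_def]
    exact_mod_cast Finset.card_pos.2 hAne
  set r : ℤ → ℕ := fun s => (B.filter (fun x => s - x ∈ A)).card with hr_def
  -- sum of r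
  have S1 : ∑ s ∈ A + B, (r s : ℝ) = a * b := by
    rw [ha_def, hb_def, ← Nat.cast_mul, ← sumR A B, Nat.cast_sum]
  -- descFactorial sum bound
  have S2 : ∑ s ∈ A + B, ((r s).descFactorial (k+1)) ≤ (g-1) * B.card ^ (k+1) := by
    calc ∑ s ∈ A + B, (r s).descFactorial (k+1)
        = ∑ s ∈ A + B, (k+1).factorial * (r s).choose (k+1) := by
          exact Finset.sum_congr rfl fun s _ => Nat.descFactorial_eq_factorial_mul_choose _ _
      _ = (k+1).factorial * ∑ s ∈ A + B, (r s).choose (k+1) := by rw [Finset.mul_sum]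
      _ ≤ (k+1).factorial * ((g-1) * B.card.choose (k+1)) :=
          Nat.mul_le_mul_left _ (sum_choose_le g (k+1) A B (A+B) hA)
      _ = (g-1) * ((k+1).factorial * B.card.choose (k+1)) := by ring
      _ = (g-1) * B.card.descFactorial (k+1) := by
          rw [← Nat.descFactorial_eq_factorial_mul_choose]
      _ ≤ (g-1) * B.card ^ (k+1) := Nat.mul_le_mul_left _ (Nat.descFactorial_le_pow _ _)
  have S2R : ∑ s ∈ A + B, (((r s).descFactorial (k+1) : ℕ) : ℝ) ≤ ((g:ℝ)-1) * b ^ (k+1) := by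
    have := S2
    have hcg : (((g-1) * B.card ^ (k+1) : ℕ) : ℝ) = ((g:ℝ)-1) * b ^ (k+1) := by
      push_cast [Nat.cast_sub (by omega : 1 ≤ g)]
      ring
    calc ∑ s ∈ A + B, (((r s).descFactorial (k+1) : ℕ) : ℝ)
        = (((∑ s ∈ A + B, (r s).descFactorial (k+1)) : ℕ) : ℝ) := by push_cast; rfl
      _ ≤ (((g-1) * B.card ^ (k+1) : ℕ) : ℝ) := by exact_mod_cast S2
      _ = ((g:ℝ)-1) * b ^ (k+1) := hcg
  -- Jensen
  have hconv := psi_convex k (k:ℝ)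
  have hw1 : ∑ _s ∈ A + B, m⁻¹ = 1 := by
    rw [Finset.sum_const, nsmul_eq_mul, hm_def]
    field_simp
  have hJ := hconv.map_sum_le (t := A + B) (w := fun _ => m⁻¹) (p := fun s => (r s : ℝ))
    (fun i _ => by positivity) hw1 (fun i _ => Set.mem_Ici.2 (Nat.cast_nonneg _))
  have hsum_w : ∑ s ∈ A + B, m⁻¹ • ((r s : ℝ)) = a * b / m := by
    simp only [smul_eq_mul]
    rw [← Finset.mul_sum, S1]
    ring
  have hsum_psi : ∑ s ∈ A + B, m⁻¹ • ((r s : ℝ) * (max ((r s : ℝ) - (k:ℝ)) 0) ^ k)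
      ≤ ((g:ℝ)-1) * b ^ (k+1) / m := by
    simp only [smul_eq_mul]
    rw [← Finset.mul_sum]
    rw [div_eq_inv_mul]
    refine mul_le_mul_of_nonneg_left ?_ (by positivity)
    refine le_trans (Finset.sum_le_sum fun s _ => psi_le_desc (r s) k hk1) S2R
  have Kineq : (a * b / m) * (max (a * b / m - (k:ℝ)) 0) ^ k ≤ ((g:ℝ)-1) * b ^ (k+1) / m := by
    have := hJ
    rw [hsum_w] at this
    exact le_trans this hsum_psi
  -- final algebra
  rcases le_or_gt a ((k:ℝ) * m / b) with hcase | hcase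
  · -- small a case
    have hexp : ((k:ℝ) + 1)/(k:ℝ) = 1 + 1/(k:ℝ) := by field_simp
    rw [hexp, Real.rpow_add haP, Real.rpow_one]
    have h1 : a * a ^ ((1:ℝ)/(k:ℝ)) ≤ ((k:ℝ) * m / b) * a ^ ((1:ℝ)/(k:ℝ)) :=
      mul_le_mul_of_nonneg_right hcase (Real.rpow_nonneg ha0 _)
    have h2 : ((k:ℝ) * m / b) * a ^ ((1:ℝ)/(k:ℝ)) = m * ((k:ℝ) * a ^ ((1:ℝ)/(k:ℝ)) / b) := by
      ring
    have h3 : (0:ℝ) ≤ m * ((g:ℝ)-1) ^ ((1:ℝ)/(k:ℝ)) := by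
      have := Real.rpow_nonneg hgR0 ((1:ℝ)/(k:ℝ))
      positivity
    nlinarith [h1, h2, h3]
  · -- large a case
    have hkm : (k:ℝ) * m < a * b := by
      rw [div_lt_iff₀ hb0] at hcase
      linarith
    have hX : (k:ℝ) < a * b / m := by
      rw [lt_div_iff₀ hm0]
      linarith
    have hmax : max (a * b / m - (k:ℝ)) 0 = a * b / m - (k:ℝ) :=
      max_eq_left (by linarith)
    rw [hmax] at Kineq
    have P : a * (a - (k:ℝ) * (m / b)) ^ k ≤ ((g:ℝ)-1) * m ^ k :=
      alg1 a b m (k:ℝ) ((g:ℝ)-1) k hb0 hm0 Kineq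
    have hklam : (k:ℝ) * (m / b) = (k:ℝ) * m / b := by ring
    have halam : 0 < a - (k:ℝ) * (m / b) := by rw [hklam]; linarith
    have hP1 : (0:ℝ) ≤ a * (a - (k:ℝ) * (m / b)) ^ k := by positivity
    have hroot := Real.rpow_le_rpow hP1 P (by positivity : (0:ℝ) ≤ 1/(k:ℝ))
    have lhs_root : (a * (a - (k:ℝ) * (m / b)) ^ k) ^ ((1:ℝ)/(k:ℝ))
        = a ^ ((1:ℝ)/(k:ℝ)) * (a - (k:ℝ) * (m / b)) := by
      rw [Real.mul_rpow ha0 (by positivity)]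
      congr 1
      rw [← Real.rpow_natCast (a - (k:ℝ) * (m / b)) k, ← Real.rpow_mul halam.le]
      rw [mul_one_div, div_self (ne_of_gt hkR0), Real.rpow_one]
    have rhs_root : (((g:ℝ)-1) * m ^ k) ^ ((1:ℝ)/(k:ℝ))
        = ((g:ℝ)-1) ^ ((1:ℝ)/(k:ℝ)) * m := by
      rw [Real.mul_rpow hgR0 (by positivity)]
      congr 1
      rw [← Real.rpow_natCast m k, ← Real.rpow_mul hm0.le]
      rw [mul_one_div, div_self (ne_of_gt hkR0), Real.rpow_one]
    rw [lhs_root, rhs_root] at hroot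
    have hexp : ((k:ℝ) + 1)/(k:ℝ) = 1 + 1/(k:ℝ) := by field_simp
    rw [hexp, Real.rpow_add haP, Real.rpow_one]
    have expand : a ^ ((1:ℝ)/(k:ℝ)) * (a - (k:ℝ) * (m / b))
        = a * a ^ ((1:ℝ)/(k:ℝ)) - m * ((k:ℝ) * a ^ ((1:ℝ)/(k:ℝ)) / b) := by
      ring
    rw [expand] at hroot
    have hsplit : m * (((g:ℝ)-1) ^ ((1:ℝ)/(k:ℝ)) + (k:ℝ) * a ^ ((1:ℝ)/(k:ℝ)) / b)
        = m * (((g:ℝ)-1) ^ ((1:ℝ)/(k:ℝ))) + m * ((k:ℝ) * a ^ ((1:ℝ)/(k:ℝ)) / b) := by ring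
    rw [hsplit]
    linarith [hroot]
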